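/- arXiv:2510.22714 — 3 statements merged into one kernel-verified Lean document; each statement's English description precedes it below -/
import Mathlib

section
/- Let X be a real random variable with finite third moment and mean μ = E[X], and let X_1, X_2, X_3 be three i.i.d. copies of X. Then E[(X - μ)^3] = E[(X_1 - X_3)(X_1 - X_2)^2] = (1/2) E[(X_1 - X_2)((X_1 - X_3)^2 - (X_2 - X_3)^2)] = (1/2) E[(X_1 - X_2)^2((X_1 - X_3) + (X_2 - X_3))] = (1/6) E[D_1 D_2 D_3], where D_i := ∑_{j ≠ i} (X_i - X_j) for i = 1, 2, 3. -/
open MeasureTheory ProbabilityTheory Finset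

lemma iIndepFun_congr_ae {Ω ι : Type*} [Countable ι] {mΩ : MeasurableSpace Ω} {μ : Measure Ω}
    {f g : ι → Ω → ℝ}
    (h : iIndepFun f μ) (hfg : ∀ i, f i =ᵐ[μ] g i) :
    iIndepFun g μ := by
  rw [iIndepFun_iff_measure_inter_preimage_eq_mul] at h ⊢
  intro S sets hsets
  have hae : ∀ᵐ ω ∂μ, ∀ i, f i ω = g i ω := ae_all_iff.2 hfg
  have h1 : μ (⋂ i ∈ S, g i ⁻¹' sets i) = μ (⋂ i ∈ S, f i ⁻¹' sets i) := by
    apply measure_congr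
    rw [Filter.eventuallyEq_set]
    filter_upwards [hae] with ω hω
    simp [Set.mem_iInter, Set.mem_preimage, hω]
  rw [h1, h S hsets]
  exact Finset.prod_congr rfl fun i _ => measure_congr (by
    rw [Filter.eventuallyEq_set]
    filter_upwards [hfg i] with ω hω
    simp [Set.mem_preimage, hω])

lemma integrable_cube' {Ω : Type*} {mΩ : MeasurableSpace Ω} {μ : Measure Ω}
    {f : Ω → ℝ} (hf : MemLp f 3 μ) : Integrable (fun ω => f ω ^ 3) μ := by
  have h1 := hf.norm_rpow (by norm_num) (by norm_num)
  have h2 : Integrable (fun ω => ‖f ω‖ ^ ENNReal.toReal 3) μ := memLp_one_iff_integrable.mp h1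
  refine h2.mono' ?_ ?_
  · exact (hf.aestronglyMeasurable.aemeasurable.pow_const 3).aestronglyMeasurable
  · filter_upwards with ω
    simp only [Real.norm_eq_abs, ENNReal.toReal_ofNat]
    rw [abs_pow]
    rw [show ((3:ℝ):ℝ) = ((3:ℕ):ℝ) by norm_num, Real.rpow_natCast]

lemma integrable_of_memL3' {Ω : Type*} {mΩ : MeasurableSpace Ω} {μ : Measure Ω}
    [IsProbabilityMeasure μ] {f : Ω → ℝ} (hf : MemLp f 3 μ) :
    Integrable f μ ∧ Integrable (fun ω => f ω ^ 2) μ ∧ Integrable (fun ω => f ω ^ 3) μ :=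
  ⟨memLp_one_iff_integrable.mp (hf.mono_exponent (by norm_num)),
    (hf.mono_exponent (by norm_num) : MemLp f 2 μ).integrable_sq, integrable_cube' hf⟩

theorem third_central_moment_D_representations
    {Ω : Type*} {mΩ : MeasurableSpace Ω} {μ : Measure Ω} [IsProbabilityMeasure μ]
    (X : Ω → ℝ) (Y : Fin 3 → Ω → ℝ) (μX : ℝ) (D : Fin 3 → Ω → ℝ)
    (hX : MemLp X 3 μ)
    (hμX : μX = ∫ a, X a ∂μ)
    (hindep : iIndepFun Y μ)
    (hid : ∀ i, IdentDistrib (Y i) X μ μ)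
    (hD : ∀ i ω, D i ω = ∑ j ∈ Finset.univ.erase i, (Y i ω - Y j ω)) :
    (∫ ω, (X ω - μX) ^ 3 ∂μ = ∫ ω, (Y 0 ω - Y 2 ω) * (Y 0 ω - Y 1 ω) ^ 2 ∂μ)
    ∧ (∫ ω, (X ω - μX) ^ 3 ∂μ
        = (1 / 2) * ∫ ω, (Y 0 ω - Y 1 ω) * ((Y 0 ω - Y 2 ω) ^ 2 - (Y 1 ω - Y 2 ω) ^ 2) ∂μ)
    ∧ (∫ ω, (X ω - μX) ^ 3 ∂μ
        = (1 / 2) * ∫ ω, (Y 0 ω - Y 1 ω) ^ 2 * ((Y 0 ω - Y 2 ω) + (Y 1 ω - Y 2 ω)) ∂μ)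
    ∧ (∫ ω, (X ω - μX) ^ 3 ∂μ = (1 / 6) * ∫ ω, D 0 ω * D 1 ω * D 2 ω ∂μ) := by
  classical
  -- measurable modifications
  set Z : Fin 3 → Ω → ℝ := fun i => ((hid i).aemeasurable_fst).mk (Y i) with hZdef
  have hZm : ∀ i, Measurable (Z i) := fun i => ((hid i).aemeasurable_fst).measurable_mk
  have hae : ∀ i, Y i =ᵐ[μ] Z i := fun i => ((hid i).aemeasurable_fst).ae_eq_mk
  have hindZ : iIndepFun Z μ := iIndepFun_congr_ae hindep hae
  have hidZ : ∀ i, IdentDistrib (Z i) X μ μ := fun i =>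
    ⟨(hZm i).aemeasurable, (hid i).aemeasurable_snd, by
      rw [← Measure.map_congr (hae i)]; exact (hid i).map_eq⟩
  have hZ3 : ∀ i, MemLp (Z i) 3 μ := fun i => (hidZ i).symm.memLp_snd hX
  have hInt := fun i => integrable_of_memL3' (hZ3 i)
  have iZ1 : ∀ i, Integrable (Z i) μ := fun i => (hInt i).1
  have iZ2 : ∀ i, Integrable (fun ω => Z i ω ^ 2) μ := fun i => (hInt i).2.1
  have iZ3 : ∀ i, Integrable (fun ω => Z i ω ^ 3) μ := fun i => (hInt i).2.2
  set M1 := ∫ ω, X ω ∂μ with hM1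
  set M2 := ∫ ω, X ω ^ 2 ∂μ with hM2
  set M3 := ∫ ω, X ω ^ 3 ∂μ with hM3
  have m1 : ∀ i, ∫ ω, Z i ω ∂μ = M1 := fun i => (hidZ i).integral_eq
  have m2 : ∀ i, ∫ ω, Z i ω ^ 2 ∂μ = M2 := fun i =>
    ((hidZ i).comp (measurable_id.pow_const 2)).integral_eq
  have m3 : ∀ i, ∫ ω, Z i ω ^ 3 ∂μ = M3 := fun i =>
    ((hidZ i).comp (measurable_id.pow_const 3)).integral_eq
  -- integrability of products
  have J21 : ∀ i j, i ≠ j → Integrable (fun ω => Z i ω ^ 2 * Z j ω) μ := by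
    intro i j hij
    exact ((hindZ.indepFun hij).comp (measurable_id.pow_const 2) measurable_id).integrable_mul
      (iZ2 i) (iZ1 j)
  have h01 : IndepFun (Z 0) (Z 1) μ := hindZ.indepFun (by decide)
  have hint01 : Integrable (Z 0 * Z 1) μ := h01.integrable_mul (iZ1 0) (iZ1 1)
  have hmul : IndepFun (Z 0 * Z 1) (Z 2) μ :=
    hindZ.indepFun_mul_left hZm 0 1 2 (by decide) (by decide)
  have J111 : Integrable (fun ω => Z 0 ω * Z 1 ω * Z 2 ω) μ :=
    hmul.integrable_mul hint01 (iZ1 2)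
  -- values of products
  have p21 : ∀ i j, i ≠ j → ∫ ω, Z i ω ^ 2 * Z j ω ∂μ = M2 * M1 := by
    intro i j hij
    have hind := (hindZ.indepFun hij).comp (measurable_id.pow_const 2) measurable_id
    have key : ∫ ω, Z i ω ^ 2 * Z j ω ∂μ = (∫ ω, Z i ω ^ 2 ∂μ) * ∫ ω, Z j ω ∂μ :=
      hind.integral_mul_eq_mul_integral (iZ2 i).aestronglyMeasurable (iZ1 j).aestronglyMeasurable
    rw [key, m2 i, m1 j]
  have p111 : ∫ ω, Z 0 ω * Z 1 ω * Z 2 ω ∂μ = M1 ^ 3 := by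
    have k1 : ∫ ω, Z 0 ω * Z 1 ω * Z 2 ω ∂μ = (∫ ω, Z 0 ω * Z 1 ω ∂μ) * ∫ ω, Z 2 ω ∂μ :=
      hmul.integral_mul_eq_mul_integral hint01.aestronglyMeasurable (iZ1 2).aestronglyMeasurable
    have k2 : ∫ ω, Z 0 ω * Z 1 ω ∂μ = (∫ ω, Z 0 ω ∂μ) * ∫ ω, Z 1 ω ∂μ :=
      h01.integral_mul_eq_mul_integral (iZ1 0).aestronglyMeasurable (iZ1 1).aestronglyMeasurable
    rw [k1, k2, m1 0, m1 1, m1 2]; ring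
  have master : ∀ c0 c1 c2 c3 c4 c5 c6 c7 c8 c9 : ℝ,
      ∫ ω, (c0 * (Z 0 ω ^ 3) + (c1 * (Z 1 ω ^ 3) + (c2 * (Z 2 ω ^ 3) + (c3 * (Z 0 ω ^ 2 * Z 1 ω) + (c4 * (Z 0 ω ^ 2 * Z 2 ω) + (c5 * (Z 1 ω ^ 2 * Z 0 ω) + (c6 * (Z 1 ω ^ 2 * Z 2 ω) + (c7 * (Z 2 ω ^ 2 * Z 0 ω) + (c8 * (Z 2 ω ^ 2 * Z 1 ω) + (c9 * (Z 0 ω * Z 1 ω * Z 2 ω))))))))))) ∂μ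
      = (c0 + c1 + c2) * M3 + (c3 + c4 + c5 + c6 + c7 + c8) * (M2 * M1) + c9 * M1 ^ 3 := by
    intro c0 c1 c2 c3 c4 c5 c6 c7 c8 c9
    have S9 : Integrable (fun ω => c9 * (Z 0 ω * Z 1 ω * Z 2 ω)) μ := by
      exact (J111).const_mul c9
    have S8 : Integrable (fun ω => c8 * (Z 2 ω ^ 2 * Z 1 ω) + (c9 * (Z 0 ω * Z 1 ω * Z 2 ω))) μ := by
      exact ((J21 2 1 (by decide)).const_mul c8).add S9
    have S7 : Integrable (fun ω => c7 * (Z 2 ω ^ 2 * Z 0 ω) + (c8 * (Z 2 ω ^ 2 * Z 1 ω) + (c9 * (Z 0 ω * Z 1 ω * Z 2 ω)))) μ := by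
      exact ((J21 2 0 (by decide)).const_mul c7).add S8
    have S6 : Integrable (fun ω => c6 * (Z 1 ω ^ 2 * Z 2 ω) + (c7 * (Z 2 ω ^ 2 * Z 0 ω) + (c8 * (Z 2 ω ^ 2 * Z 1 ω) + (c9 * (Z 0 ω * Z 1 ω * Z 2 ω))))) μ := by
      exact ((J21 1 2 (by decide)).const_mul c6).add S7
    have S5 : Integrable (fun ω => c5 * (Z 1 ω ^ 2 * Z 0 ω) + (c6 * (Z 1 ω ^ 2 * Z 2 ω) + (c7 * (Z 2 ω ^ 2 * Z 0 ω) + (c8 * (Z 2 ω ^ 2 * Z 1 ω) + (c9 * (Z 0 ω * Z 1 ω * Z 2 ω)))))) μ := by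
      exact ((J21 1 0 (by decide)).const_mul c5).add S6
    have S4 : Integrable (fun ω => c4 * (Z 0 ω ^ 2 * Z 2 ω) + (c5 * (Z 1 ω ^ 2 * Z 0 ω) + (c6 * (Z 1 ω ^ 2 * Z 2 ω) + (c7 * (Z 2 ω ^ 2 * Z 0 ω) + (c8 * (Z 2 ω ^ 2 * Z 1 ω) + (c9 * (Z 0 ω * Z 1 ω * Z 2 ω))))))) μ := by
      exact ((J21 0 2 (by decide)).const_mul c4).add S5
    have S3 : Integrable (fun ω => c3 * (Z 0 ω ^ 2 * Z 1 ω) + (c4 * (Z 0 ω ^ 2 * Z 2 ω) + (c5 * (Z 1 ω ^ 2 * Z 0 ω) + (c6 * (Z 1 ω ^ 2 * Z 2 ω) + (c7 * (Z 2 ω ^ 2 * Z 0 ω) + (c8 * (Z 2 ω ^ 2 * Z 1 ω) + (c9 * (Z 0 ω * Z 1 ω * Z 2 ω)))))))) μ := by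
      exact ((J21 0 1 (by decide)).const_mul c3).add S4
    have S2 : Integrable (fun ω => c2 * (Z 2 ω ^ 3) + (c3 * (Z 0 ω ^ 2 * Z 1 ω) + (c4 * (Z 0 ω ^ 2 * Z 2 ω) + (c5 * (Z 1 ω ^ 2 * Z 0 ω) + (c6 * (Z 1 ω ^ 2 * Z 2 ω) + (c7 * (Z 2 ω ^ 2 * Z 0 ω) + (c8 * (Z 2 ω ^ 2 * Z 1 ω) + (c9 * (Z 0 ω * Z 1 ω * Z 2 ω))))))))) μ := by
      exact ((iZ3 2).const_mul c2).add S3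
    have S1 : Integrable (fun ω => c1 * (Z 1 ω ^ 3) + (c2 * (Z 2 ω ^ 3) + (c3 * (Z 0 ω ^ 2 * Z 1 ω) + (c4 * (Z 0 ω ^ 2 * Z 2 ω) + (c5 * (Z 1 ω ^ 2 * Z 0 ω) + (c6 * (Z 1 ω ^ 2 * Z 2 ω) + (c7 * (Z 2 ω ^ 2 * Z 0 ω) + (c8 * (Z 2 ω ^ 2 * Z 1 ω) + (c9 * (Z 0 ω * Z 1 ω * Z 2 ω)))))))))) μ := by
      exact ((iZ3 1).const_mul c1).add S2
    rw [integral_add ((iZ3 0).const_mul c0) S1, integral_add ((iZ3 1).const_mul c1) S2, integral_add ((iZ3 2).const_mul c2) S3, integral_add ((J21 0 1 (by decide)).const_mul c3) S4, integral_add ((J21 0 2 (by decide)).const_mul c4) S5, integral_add ((J21 1 0 (by decide)).const_mul c5) S6, integral_add ((J21 1 2 (by decide)).const_mul c6) S7, integral_add ((J21 2 0 (by decide)).const_mul c7) S8, integral_add ((J21 2 1 (by decide)).const_mul c8) S9]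
    simp only [integral_const_mul]
    rw [m3 0, m3 1, m3 2, p21 0 1 (by decide), p21 0 2 (by decide), p21 1 0 (by decide), p21 1 2 (by decide), p21 2 0 (by decide), p21 2 1 (by decide), p111]
    ring
  
  obtain ⟨iX1, iX2, iX3⟩ := integrable_of_memL3' hX
  have eL : ∫ ω, (X ω - μX) ^ 3 ∂μ = M3 - 3 * M1 * M2 + 2 * M1 ^ 3 := by
    have e : (fun ω => (X ω - μX) ^ 3)
        = fun ω => X ω ^ 3 + (-(3 * μX) * X ω ^ 2 + (3 * μX ^ 2 * X ω + -(μX ^ 3))) := by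
      funext ω; ring
    have r2 : Integrable (fun ω => 3 * μX ^ 2 * X ω + -μX ^ 3) μ :=
      (iX1.const_mul _).add (integrable_const _)
    have r1 : Integrable (fun ω => -(3 * μX) * X ω ^ 2 + (3 * μX ^ 2 * X ω + -μX ^ 3)) μ :=
      (iX2.const_mul _).add r2
    rw [e, integral_add iX3 r1, integral_add (iX2.const_mul _) r2,
      integral_add (iX1.const_mul _) (integrable_const _),
      integral_const_mul, integral_const_mul, integral_const]
    simp only [probReal_univ, measure_univ, ENNReal.toReal_one, smul_eq_mul, one_mul]
    rw [← hM3, ← hM2, ← hM1, hμX]; ring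
  have g1 : ∫ ω, (Y 0 ω - Y 2 ω) * (Y 0 ω - Y 1 ω) ^ 2 ∂μ = ∫ ω, (Z 0 ω - Z 2 ω) * (Z 0 ω - Z 1 ω) ^ 2 ∂μ :=
    integral_congr_ae (by filter_upwards [hae 0, hae 1, hae 2] with ω h0 h1 h2; rw [h0, h1, h2])
  have g2 : ∫ ω, (Y 0 ω - Y 1 ω) * ((Y 0 ω - Y 2 ω) ^ 2 - (Y 1 ω - Y 2 ω) ^ 2) ∂μ = ∫ ω, (Z 0 ω - Z 1 ω) * ((Z 0 ω - Z 2 ω) ^ 2 - (Z 1 ω - Z 2 ω) ^ 2) ∂μ :=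
    integral_congr_ae (by filter_upwards [hae 0, hae 1, hae 2] with ω h0 h1 h2; rw [h0, h1, h2])
  have g3 : ∫ ω, (Y 0 ω - Y 1 ω) ^ 2 * ((Y 0 ω - Y 2 ω) + (Y 1 ω - Y 2 ω)) ∂μ = ∫ ω, (Z 0 ω - Z 1 ω) ^ 2 * ((Z 0 ω - Z 2 ω) + (Z 1 ω - Z 2 ω)) ∂μ :=
    integral_congr_ae (by filter_upwards [hae 0, hae 1, hae 2] with ω h0 h1 h2; rw [h0, h1, h2])
  have hD0 : ∀ ω, D 0 ω = 2 * Y 0 ω - Y 1 ω - Y 2 ω := by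
    intro ω; rw [hD, show (univ.erase (0 : Fin 3)) = {1, 2} from by decide,
      Finset.sum_insert (by decide), Finset.sum_singleton]; ring
  have hD1 : ∀ ω, D 1 ω = 2 * Y 1 ω - Y 0 ω - Y 2 ω := by
    intro ω; rw [hD, show (univ.erase (1 : Fin 3)) = {0, 2} from by decide,
      Finset.sum_insert (by decide), Finset.sum_singleton]; ring
  have hD2 : ∀ ω, D 2 ω = 2 * Y 2 ω - Y 0 ω - Y 1 ω := by
    intro ω; rw [hD, show (univ.erase (2 : Fin 3)) = {0, 1} from by decide,
      Finset.sum_insert (by decide), Finset.sum_singleton]; ring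
  have g4 : ∫ ω, D 0 ω * D 1 ω * D 2 ω ∂μ = ∫ ω, (2 * Z 0 ω - Z 1 ω - Z 2 ω) * (2 * Z 1 ω - Z 0 ω - Z 2 ω) * (2 * Z 2 ω - Z 0 ω - Z 1 ω) ∂μ := by
    apply integral_congr_ae
    filter_upwards [hae 0, hae 1, hae 2] with ω h0 h1 h2
    rw [hD0 ω, hD1 ω, hD2 ω, h0, h1, h2]
  have v1 : ∫ ω, (Z 0 ω - Z 2 ω) * (Z 0 ω - Z 1 ω) ^ 2 ∂μ
      = (1 + 0 + 0 : ℝ) * M3 + (-2 + (-1) + 1 + (-1) + 0 + 0 : ℝ) * (M2 * M1) + 2 * M1 ^ 3 := by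
    have e : (fun ω => (Z 0 ω - Z 2 ω) * (Z 0 ω - Z 1 ω) ^ 2) = fun ω => 1 * (Z 0 ω ^ 3) + (0 * (Z 1 ω ^ 3) + (0 * (Z 2 ω ^ 3) + ((-2) * (Z 0 ω ^ 2 * Z 1 ω) + ((-1) * (Z 0 ω ^ 2 * Z 2 ω) + (1 * (Z 1 ω ^ 2 * Z 0 ω) + ((-1) * (Z 1 ω ^ 2 * Z 2 ω) + (0 * (Z 2 ω ^ 2 * Z 0 ω) + (0 * (Z 2 ω ^ 2 * Z 1 ω) + (2 * (Z 0 ω * Z 1 ω * Z 2 ω)))))))))) := by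
      funext ω; ring
    rw [e, master 1 0 0 (-2) (-1) 1 (-1) 0 0 2]
  have v2 : ∫ ω, (Z 0 ω - Z 1 ω) * ((Z 0 ω - Z 2 ω) ^ 2 - (Z 1 ω - Z 2 ω) ^ 2) ∂μ
      = (1 + 1 + 0 : ℝ) * M3 + (-1 + (-2) + (-1) + (-2) + 0 + 0 : ℝ) * (M2 * M1) + 4 * M1 ^ 3 := by
    have e : (fun ω => (Z 0 ω - Z 1 ω) * ((Z 0 ω - Z 2 ω) ^ 2 - (Z 1 ω - Z 2 ω) ^ 2)) = fun ω => 1 * (Z 0 ω ^ 3) + (1 * (Z 1 ω ^ 3) + (0 * (Z 2 ω ^ 3) + ((-1) * (Z 0 ω ^ 2 * Z 1 ω) + ((-2) * (Z 0 ω ^ 2 * Z 2 ω) + ((-1) * (Z 1 ω ^ 2 * Z 0 ω) + ((-2) * (Z 1 ω ^ 2 * Z 2 ω) + (0 * (Z 2 ω ^ 2 * Z 0 ω) + (0 * (Z 2 ω ^ 2 * Z 1 ω) + (4 * (Z 0 ω * Z 1 ω * Z 2 ω)))))))))) := by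
      funext ω; ring
    rw [e, master 1 1 0 (-1) (-2) (-1) (-2) 0 0 4]
  have v3 : ∫ ω, (Z 0 ω - Z 1 ω) ^ 2 * ((Z 0 ω - Z 2 ω) + (Z 1 ω - Z 2 ω)) ∂μ
      = (1 + 1 + 0 : ℝ) * M3 + (-1 + (-2) + (-1) + (-2) + 0 + 0 : ℝ) * (M2 * M1) + 4 * M1 ^ 3 := by
    have e : (fun ω => (Z 0 ω - Z 1 ω) ^ 2 * ((Z 0 ω - Z 2 ω) + (Z 1 ω - Z 2 ω))) = fun ω => 1 * (Z 0 ω ^ 3) + (1 * (Z 1 ω ^ 3) + (0 * (Z 2 ω ^ 3) + ((-1) * (Z 0 ω ^ 2 * Z 1 ω) + ((-2) * (Z 0 ω ^ 2 * Z 2 ω) + ((-1) * (Z 1 ω ^ 2 * Z 0 ω) + ((-2) * (Z 1 ω ^ 2 * Z 2 ω) + (0 * (Z 2 ω ^ 2 * Z 0 ω) + (0 * (Z 2 ω ^ 2 * Z 1 ω) + (4 * (Z 0 ω * Z 1 ω * Z 2 ω)))))))))) := by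
      funext ω; ring
    rw [e, master 1 1 0 (-1) (-2) (-1) (-2) 0 0 4]
  have v4 : ∫ ω, (2 * Z 0 ω - Z 1 ω - Z 2 ω) * (2 * Z 1 ω - Z 0 ω - Z 2 ω) * (2 * Z 2 ω - Z 0 ω - Z 1 ω) ∂μ
      = (2 + 2 + 2 : ℝ) * M3 + (-3 + (-3) + (-3) + (-3) + (-3) + (-3) : ℝ) * (M2 * M1) + 12 * M1 ^ 3 := by
    have e : (fun ω => (2 * Z 0 ω - Z 1 ω - Z 2 ω) * (2 * Z 1 ω - Z 0 ω - Z 2 ω) * (2 * Z 2 ω - Z 0 ω - Z 1 ω)) = fun ω => 2 * (Z 0 ω ^ 3) + (2 * (Z 1 ω ^ 3) + (2 * (Z 2 ω ^ 3) + ((-3) * (Z 0 ω ^ 2 * Z 1 ω) + ((-3) * (Z 0 ω ^ 2 * Z 2 ω) + ((-3) * (Z 1 ω ^ 2 * Z 0 ω) + ((-3) * (Z 1 ω ^ 2 * Z 2 ω) + ((-3) * (Z 2 ω ^ 2 * Z 0 ω) + ((-3) * (Z 2 ω ^ 2 * Z 1 ω) + (12 * (Z 0 ω * Z 1 ω * Z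 2 ω)))))))))) := by
      funext ω; ring
    rw [e, master 2 2 2 (-3) (-3) (-3) (-3) (-3) (-3) 12]
  refine ⟨?_, ?_, ?_, ?_⟩
  · rw [eL, g1, v1]; ring
  · rw [eL, g2, v2]; ring
  · rw [eL, g3, v3]; ring
  · rw [eL, g4, v4]; ring
end

section
/- Let X be a real random variable with finite moments up to order n ≥ 1 and mean μ = E[X], and let X_0, X_1, ..., X_n be i.i.d. copies of X. Then for every k with 1 ≤ k ≤ n, E[∏_{i=1}^k (X_0 - X_i)] = E[(X - μ)^k], i.e., the product of pairwise differences P_k := ∏_{i=1}^k (X_0 - X_i) is an unbiased estimator of the k-th central moment μ_k. -/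
open MeasureTheory ProbabilityTheory Finset
open scoped ENNReal
open Fin.NatCast

lemma my_iIndepFun_congr {Ω ι : Type*} {mΩ : MeasurableSpace Ω} {μ : Measure Ω}
    {f g : ι → Ω → ℝ} (h : iIndepFun f μ)
    (hfg : ∀ i, f i =ᵐ[μ] g i) : iIndepFun g μ := by
  rw [iIndepFun_iff_measure_inter_preimage_eq_mul] at h ⊢
  intro S sets hsets
  have hae : ∀ᵐ ω ∂μ, ∀ i ∈ S, f i ω = g i ω :=
    (ae_ball_iff S.countable_toSet).2 (fun i _ => hfg i)
  have h1 : μ (⋂ i ∈ S, g i ⁻¹' sets i) = μ (⋂ i ∈ S, f i ⁻¹' sets i) := by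
    apply measure_congr
    rw [Filter.eventuallyEq_set]
    filter_upwards [hae] with ω hω
    simp only [Set.mem_iInter, Set.mem_preimage]
    exact ⟨fun H i hi => (hω i hi) ▸ H i hi, fun H i hi => (hω i hi) ▸ H i hi⟩
  rw [h1, h S hsets]
  exact Finset.prod_congr rfl fun i _ => measure_congr (by
    rw [Filter.eventuallyEq_set]
    filter_upwards [hfg i] with ω hω
    simp [Set.mem_preimage, hω])

lemma my_integrable_pow {Ω : Type*} {mΩ : MeasurableSpace Ω} {μ : Measure Ω}
    [IsProbabilityMeasure μ] {X : Ω → ℝ} {n : ℕ} (hX : MemLp X n μ) (m : ℕ) (hm : m ≤ n) :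
    Integrable (fun ω => X ω ^ m) μ := by
  rcases Nat.eq_zero_or_pos m with hm0 | hm0
  · simp [hm0]
  have h1 : MemLp X m μ := hX.mono_exponent (by exact_mod_cast Nat.cast_le.2 hm)
  have h2 : Integrable (fun x => ‖X x‖ ^ (((m : ℕ) : ℝ≥0∞)).toReal) μ :=
    memLp_one_iff_integrable.1 (h1.norm_rpow (by exact_mod_cast hm0.ne') (by simp))
  have h3 : Integrable (fun x => ‖X x‖ ^ m) μ := by
    simpa [Real.rpow_natCast] using h2
  refine h3.mono' ?_ ?_
  · exact (hX.aestronglyMeasurable.aemeasurable.pow_const m).aestronglyMeasurable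
  · filter_upwards with ω
    simp [abs_pow]

lemma my_prod_integral {Ω ι : Type*} {mΩ : MeasurableSpace Ω} {μ : Measure Ω}
    [IsProbabilityMeasure μ] {Z : ι → Ω → ℝ}
    (hmeas : ∀ i, Measurable (Z i))
    (hindep : iIndepFun Z μ)
    (hint : ∀ i, Integrable (Z i) μ) (s : Finset ι) :
    Integrable (fun ω => ∏ j ∈ s, Z j ω) μ ∧
      ∫ ω, ∏ j ∈ s, Z j ω ∂μ = ∏ j ∈ s, ∫ ω, Z j ω ∂μ := by
  classical
  induction s using Finset.induction with
  | empty => simp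
  | insert _ _ hi _ =>
    rename_i i s ih
    have hIndep : IndepFun (Z i) (fun ω => ∏ j ∈ s, Z j ω) μ := by
      have h := (hindep.indepFun_finset_prod_of_notMem hmeas hi).symm
      have he : (∏ j ∈ s, Z j) = fun ω => ∏ j ∈ s, Z j ω := by
        funext ω; simp
      rwa [he] at h
    constructor
    · have := hIndep.integrable_mul (hint i) ih.1
      simpa [Finset.prod_insert hi, Pi.mul_def] using this
    · rw [show (fun ω => ∏ j ∈ insert i s, Z j ω) = fun ω => Z i ω * ∏ j ∈ s, Z j ω from
        funext fun ω => Finset.prod_insert hi]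
      have := hIndep.integral_mul_eq_mul_integral (hint i).aestronglyMeasurable ih.1.aestronglyMeasurable
      have he : (Z i * fun ω => ∏ j ∈ s, Z j ω) = fun a => Z i a * ∏ j ∈ s, Z j a := rfl
      rw [he] at this
      rw [this, ih.2, Finset.prod_insert hi]

lemma my_sum_eq (M : ℕ → ℝ) (c : ℝ) (k : ℕ) :
    ∑ m ∈ range (k + 1), (k.choose m) • ((-1 : ℝ) ^ m * M (k - m) * c ^ m)
      = ∑ m ∈ range (k + 1), (-1 : ℝ) ^ (m + k) * M m * c ^ (k - m) * k.choose m := by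
  rw [← Finset.sum_range_reflect]
  refine Finset.sum_congr rfl fun m hm => ?_
  have hmk : m ≤ k := Nat.lt_succ_iff.1 (Finset.mem_range.1 hm)
  have h1 : k + 1 - 1 - m = k - m := by omega
  have h2 : k - (k - m) = m := by omega
  have h3 : k.choose (k - m) = k.choose m := Nat.choose_symm hmk
  have h4 : (-1 : ℝ) ^ (k - m) = (-1) ^ (m + k) := by
    have : m + k = (k - m) + 2 * m := by omega
    rw [this, pow_add]; simp [pow_mul]
  rw [h1, h2, h3, h4, nsmul_eq_mul]
  ring

theorem product_of_differences_unbiased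
    {Ω : Type*} {mΩ : MeasurableSpace Ω} {μ : Measure Ω} [IsProbabilityMeasure μ]
    (n : ℕ) (hn : 1 ≤ n)
    (X : Ω → ℝ) (Y : Fin (n + 1) → Ω → ℝ) (μX : ℝ)
    (hX : MemLp X n μ)
    (hμX : μX = ∫ a, X a ∂μ)
    (hindep : iIndepFun Y μ)
    (hid : ∀ i, IdentDistrib (Y i) X μ μ) :
    ∀ k, 1 ≤ k → k ≤ n →
      ∫ ω, ∏ i ∈ Finset.range k, (Y 0 ω - Y ((i + 1 : ℕ) : Fin (n + 1)) ω) ∂μ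
        = ∫ ω, (X ω - μX) ^ k ∂μ := by
  classical
  intro k hk1 hkn
  set g : ℕ → Fin (n + 1) := fun i => ((i + 1 : ℕ) : Fin (n + 1)) with hg
  -- measurable modifications
  set Y' : Fin (n + 1) → Ω → ℝ := fun i => ((hid i).aemeasurable_fst).mk (Y i) with hY'
  have hY'meas : ∀ i, Measurable (Y' i) := fun i => ((hid i).aemeasurable_fst).measurable_mk
  have hY'ae : ∀ i, Y i =ᵐ[μ] Y' i := fun i => ((hid i).aemeasurable_fst).ae_eq_mk
  have hindep' : iIndepFun Y' μ := my_iIndepFun_congr hindep hY'ae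
  have hid' : ∀ i, IdentDistrib (Y' i) X μ μ := fun i =>
    (IdentDistrib.symm ⟨(hid i).aemeasurable_fst, (hY'meas i).aemeasurable,
      Measure.map_congr (hY'ae i)⟩).trans (hid i)
  set M : ℕ → ℝ := fun m => ∫ ω, X ω ^ m ∂μ with hM
  have hMint : ∀ m, m ≤ n → Integrable (fun ω => X ω ^ m) μ := my_integrable_pow hX
  have hidpow : ∀ j m, IdentDistrib (fun ω => Y' j ω ^ m) (fun ω => X ω ^ m) μ μ := by
    intro j m
    exact (hid' j).comp (measurable_id.pow_const m)
  have hY'pint : ∀ (j : Fin (n + 1)) m, m ≤ n → Integrable (fun ω => Y' j ω ^ m) μ :=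
    fun j m hm => (hidpow j m).integrable_iff.2 (hMint m hm)
  have hY'pM : ∀ (j : Fin (n + 1)) m, ∫ ω, Y' j ω ^ m ∂μ = M m :=
    fun j m => (hidpow j m).integral_eq
  have hM1 : M 1 = μX := by simp [hM, hμX]
  -- facts about g on range k
  have hgval : ∀ i ∈ range k, (g i : ℕ) = i + 1 := by
    intro i hi
    have : i + 1 < n + 1 := by
      have := Finset.mem_range.1 hi; omega
    show (((i + 1 : ℕ) : Fin (n + 1)) : ℕ) = i + 1
    exact Fin.val_cast_of_lt this
  have hg0 : ∀ i ∈ range k, g i ≠ 0 := by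
    intro i hi h
    have := hgval i hi
    rw [h] at this
    simp at this
  -- step 1 : switch to Y'
  have step1 : ∫ ω, ∏ i ∈ Finset.range k, (Y 0 ω - Y (g i) ω) ∂μ
      = ∫ ω, ∏ i ∈ Finset.range k, (Y' 0 ω - Y' (g i) ω) ∂μ := by
    apply integral_congr_ae
    have hae : ∀ᵐ ω ∂μ, ∀ j, Y j ω = Y' j ω := ae_all_iff.2 hY'ae
    filter_upwards [hae] with ω hω
    exact Finset.prod_congr rfl fun i _ => by rw [hω 0, hω (g i)]
  -- pointwise expansion
  have expand : ∀ ω, ∏ i ∈ Finset.range k, (Y' 0 ω - Y' (g i) ω)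
      = ∑ t ∈ (range k).powerset,
          (-1 : ℝ) ^ t.card * ((∏ i ∈ t, Y' (g i) ω) * Y' 0 ω ^ (k - t.card)) := by
    intro ω
    have : ∀ i, Y' 0 ω - Y' (g i) ω = -Y' (g i) ω + Y' 0 ω := fun i => by ring
    simp only [this]
    rw [Finset.prod_add]
    refine Finset.sum_congr rfl fun t ht => ?_
    have hts := Finset.mem_powerset.1 ht
    have hcard : (range k \ t).card = k - t.card := by
      rw [Finset.card_sdiff_of_subset hts, Finset.card_range]
    rw [Finset.prod_const, hcard]
    have : ∏ i ∈ t, -Y' (g i) ω = (-1 : ℝ) ^ t.card * ∏ i ∈ t, Y' (g i) ω := by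
      rw [← Finset.prod_const (-1 : ℝ), ← Finset.prod_mul_distrib]
      exact Finset.prod_congr rfl fun i _ => by ring
    rw [this, mul_assoc]
  -- per-subset analysis
  have key : ∀ t ∈ (range k).powerset,
      Integrable (fun ω => (-1 : ℝ) ^ t.card *
        ((∏ i ∈ t, Y' (g i) ω) * Y' 0 ω ^ (k - t.card))) μ ∧
      ∫ ω, (-1 : ℝ) ^ t.card * ((∏ i ∈ t, Y' (g i) ω) * Y' 0 ω ^ (k - t.card)) ∂μ
        = (-1 : ℝ) ^ t.card * (M (k - t.card) * μX ^ t.card) := by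
    intro t ht
    have hts := Finset.mem_powerset.1 ht
    set e : Fin (n + 1) → ℕ := fun j => if j = 0 then k - t.card else 1 with he
    set Z : Fin (n + 1) → Ω → ℝ := fun j ω => Y' j ω ^ e j with hZ
    have hZmeas : ∀ j, Measurable (Z j) := fun j => (hY'meas j).pow_const (e j)
    have hZindep : iIndepFun Z μ :=
      hindep'.comp (fun j x => x ^ e j) (fun j => measurable_id.pow_const (e j))
    have hZint : ∀ j, Integrable (Z j) μ := by
      intro j
      apply hY'pint j (e j)
      rcases eq_or_ne j 0 with h | h <;> simp [he, h] <;> omega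
    have hinj : Set.InjOn g ↑t := by
      intro a ha b hb hab
      have h1 := hgval a (hts ha)
      have h2 := hgval b (hts hb)
      have : (g a : ℕ) = (g b : ℕ) := by rw [hab]
      omega
    have h0img : (0 : Fin (n + 1)) ∉ t.image g := by
      intro h
      rw [Finset.mem_image] at h
      obtain ⟨i, hi, hgi⟩ := h
      exact hg0 i (hts hi) hgi
    set S : Finset (Fin (n + 1)) := insert 0 (t.image g) with hS
    have hprodZ : ∀ ω, ∏ j ∈ S, Z j ω
        = Y' 0 ω ^ (k - t.card) * ∏ i ∈ t, Y' (g i) ω := by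
      intro ω
      rw [hS, Finset.prod_insert h0img, Finset.prod_image hinj]
      have h0 : Z 0 ω = Y' 0 ω ^ (k - t.card) := by simp [hZ, he]
      have ht1 : ∀ i ∈ t, Z (g i) ω = Y' (g i) ω := fun i hi => by
        simp [hZ, he, hg0 i (hts hi)]
      rw [h0, Finset.prod_congr rfl ht1]
    obtain ⟨hPint, hPeq⟩ := my_prod_integral hZmeas hZindep hZint S
    have hfun : (fun ω => (-1 : ℝ) ^ t.card *
        ((∏ i ∈ t, Y' (g i) ω) * Y' 0 ω ^ (k - t.card)))
        = fun ω => (-1 : ℝ) ^ t.card * ∏ j ∈ S, Z j ω := by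
      funext ω; rw [hprodZ ω]; ring
    have hprodint : ∏ j ∈ S, ∫ ω, Z j ω ∂μ = M (k - t.card) * μX ^ t.card := by
      rw [hS, Finset.prod_insert h0img, Finset.prod_image hinj]
      have h0 : (∫ ω, Z 0 ω ∂μ) = M (k - t.card) := by
        rw [show (fun ω => Z 0 ω) = fun ω => Y' 0 ω ^ (k - t.card) from by
          funext ω; simp [hZ, he]]
        exact hY'pM 0 (k - t.card)
      have ht1 : ∀ i ∈ t, (∫ ω, Z (g i) ω ∂μ) = μX := by
        intro i hi
        rw [show (fun ω => Z (g i) ω) = fun ω => Y' (g i) ω ^ 1 from by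
          funext ω; simp [hZ, he, hg0 i (hts hi)]]
        rw [hY'pM (g i) 1, hM1]
      rw [h0, Finset.prod_congr rfl ht1, Finset.prod_const]
    constructor
    · rw [hfun]; exact hPint.const_mul _
    · rw [hfun, integral_const_mul, hPeq, hprodint]
  -- combine LHS
  have lhs_eq : ∫ ω, ∏ i ∈ Finset.range k, (Y' 0 ω - Y' (g i) ω) ∂μ
      = ∑ t ∈ (range k).powerset, (-1 : ℝ) ^ t.card * (M (k - t.card) * μX ^ t.card) := by
    rw [show (fun ω => ∏ i ∈ Finset.range k, (Y' 0 ω - Y' (g i) ω))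
        = fun ω => ∑ t ∈ (range k).powerset,
            (-1 : ℝ) ^ t.card * ((∏ i ∈ t, Y' (g i) ω) * Y' 0 ω ^ (k - t.card)) from
      funext expand]
    rw [integral_finset_sum _ fun t ht => (key t ht).1]
    exact Finset.sum_congr rfl fun t ht => (key t ht).2
  -- RHS expansion
  have rhs_eq : ∫ ω, (X ω - μX) ^ k ∂μ
      = ∑ m ∈ range (k + 1), (-1 : ℝ) ^ (m + k) * M m * μX ^ (k - m) * k.choose m := by
    have hexp : ∀ ω, (X ω - μX) ^ k
        = ∑ m ∈ range (k + 1), (-1 : ℝ) ^ (m + k) * X ω ^ m * μX ^ (k - m) * k.choose m :=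
      fun ω => sub_pow (X ω) μX k
    rw [show (fun ω => (X ω - μX) ^ k) = fun ω => ∑ m ∈ range (k + 1),
        (-1 : ℝ) ^ (m + k) * X ω ^ m * μX ^ (k - m) * k.choose m from funext hexp]
    have hintm : ∀ m ∈ range (k + 1), Integrable
        (fun ω => (-1 : ℝ) ^ (m + k) * X ω ^ m * μX ^ (k - m) * (k.choose m : ℝ)) μ := by
      intro m hm
      have hmn : m ≤ n := le_trans (Nat.lt_succ_iff.1 (Finset.mem_range.1 hm)) hkn
      rw [show (fun ω => (-1 : ℝ) ^ (m + k) * X ω ^ m * μX ^ (k - m) * (k.choose m : ℝ))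
          = fun ω => ((-1 : ℝ) ^ (m + k) * μX ^ (k - m) * (k.choose m : ℝ)) * X ω ^ m from
        funext fun ω => by ring]
      exact (hMint m hmn).const_mul _
    rw [integral_finset_sum _ hintm]
    refine Finset.sum_congr rfl fun m hm => ?_
    rw [show (fun ω => (-1 : ℝ) ^ (m + k) * X ω ^ m * μX ^ (k - m) * (k.choose m : ℝ))
        = fun ω => ((-1 : ℝ) ^ (m + k) * μX ^ (k - m) * (k.choose m : ℝ)) * X ω ^ m from
      funext fun ω => by ring]
    rw [integral_const_mul]
    show ((-1 : ℝ) ^ (m + k) * μX ^ (k - m) * (k.choose m : ℝ)) * M m = _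
    ring
  have hps := Finset.sum_powerset_apply_card
    (fun m => (-1 : ℝ) ^ m * M (k - m) * μX ^ m) (x := range k)
  rw [Finset.card_range] at hps
  rw [step1, lhs_eq, rhs_eq, ← my_sum_eq M μX k, ← hps]
  exact Finset.sum_congr rfl fun t _ => by ring
end

section
/- Let X be a real random variable with mean μ = E[X] and finite central moments μ_j := E[(X - μ)^j] for j = 1, ..., n+1, where n ≥ 1 and n+1 is even, and let X_1, X_2 be i.i.d. copies of X. Then μ_{n+1} = (1/2)[E[(X_1 - X_2)^{n+1}] - ∑_{j=2}^{n-1} (-1)^j binom(n+1, j) μ_j μ_{n+1-j}]. -/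
open MeasureTheory ProbabilityTheory Finset

lemma integrable_pow_of_memLp {Ω : Type*} {mΩ : MeasurableSpace Ω} {μ : Measure Ω}
    [IsProbabilityMeasure μ] {Y : Ω → ℝ} {p : ENNReal} {j : ℕ} (hY : MemLp Y p μ)
    (hj : (j : ENNReal) ≤ p) :
    Integrable (fun ω => Y ω ^ j) μ := by
  rcases Nat.eq_zero_or_pos j with rfl | hj0
  · simpa using integrable_const (1 : ℝ)
  have h1 : MemLp Y j μ := hY.mono_exponent hj
  have h2 : Integrable (fun ω => ‖Y ω‖ ^ ((j : ENNReal).toReal)) μ :=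
    h1.integrable_norm_rpow (by exact_mod_cast hj0.ne') (by simp)
  have h3 : Integrable (fun ω => ‖Y ω‖ ^ (j : ℝ)) μ := by simpa using h2
  refine h3.mono' ?_ ?_
  · exact (h1.aestronglyMeasurable.aemeasurable.pow_const j).aestronglyMeasurable
  · filter_upwards with ω
    rw [Real.norm_eq_abs, abs_pow, ← Real.rpow_natCast |Y ω| j, Real.norm_eq_abs]

theorem central_moment_recursion_even
    {Ω : Type*} {mΩ : MeasurableSpace Ω} {μ : Measure Ω} [IsProbabilityMeasure μ]
    (n : ℕ) (hn : 1 ≤ n) (heven : Even (n + 1))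
    (X X₁ X₂ : Ω → ℝ) (μX : ℝ) (mom : ℕ → ℝ)
    (hX : MemLp X (n + 1) μ)
    (hμX : μX = ∫ a, X a ∂μ)
    (hmom : ∀ j, mom j = ∫ ω, (X ω - μX) ^ j ∂μ)
    (hindep : IndepFun X₁ X₂ μ)
    (hid1 : IdentDistrib X₁ X μ μ) (hid2 : IdentDistrib X₂ X μ μ) :
    mom (n + 1)
      = (1 / 2) * ((∫ ω, (X₁ ω - X₂ ω) ^ (n + 1) ∂μ)
          - ∑ j ∈ Finset.Icc 2 (n - 1),
              (-1 : ℝ) ^ j * ((n + 1).choose j : ℝ) * mom j * mom (n + 1 - j)) := by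
  have hmeas : ∀ j : ℕ, Measurable (fun x : ℝ => (x - μX) ^ j) := fun j =>
    (measurable_id.sub_const μX).pow_const j
  have hYmem : MemLp (fun ω => X ω - μX) (n + 1) μ := hX.sub (memLp_const μX)
  have hintY : ∀ j ≤ n + 1, Integrable (fun ω => (X ω - μX) ^ j) μ := fun j hj =>
    integrable_pow_of_memLp hYmem (by
      have : ((j : ℕ) : ENNReal) ≤ ((n + 1 : ℕ) : ENNReal) := Nat.cast_le.2 hj
      simpa using this)
  have hidp1 : ∀ j : ℕ, IdentDistrib (fun ω => (X₁ ω - μX) ^ j)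
      (fun ω => (X ω - μX) ^ j) μ μ := fun j => hid1.comp (hmeas j)
  have hidp2 : ∀ j : ℕ, IdentDistrib (fun ω => (X₂ ω - μX) ^ j)
      (fun ω => (X ω - μX) ^ j) μ μ := fun j => hid2.comp (hmeas j)
  have hint1 : ∀ j ≤ n + 1, Integrable (fun ω => (X₁ ω - μX) ^ j) μ := fun j hj =>
    ((hidp1 j).integrable_iff).2 (hintY j hj)
  have hint2 : ∀ j ≤ n + 1, Integrable (fun ω => (X₂ ω - μX) ^ j) μ := fun j hj =>
    ((hidp2 j).integrable_iff).2 (hintY j hj)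
  have hindp : ∀ j k : ℕ, IndepFun (fun ω => (X₁ ω - μX) ^ j)
      (fun ω => (X₂ ω - μX) ^ k) μ := fun j k => hindep.comp (hmeas j) (hmeas k)
  have hprodint : ∀ j k, j ≤ n + 1 → k ≤ n + 1 →
      Integrable (fun ω => (X₁ ω - μX) ^ j * (X₂ ω - μX) ^ k) μ := fun j k hj hk =>
    (hindp j k).integrable_mul (hint1 j hj) (hint2 k hk)
  have hprod : ∀ j k, j ≤ n + 1 → k ≤ n + 1 →
      ∫ ω, (X₁ ω - μX) ^ j * (X₂ ω - μX) ^ k ∂μ = mom j * mom k := by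
    intro j k hj hk
    have h := (hindp j k).integral_mul_eq_mul_integral (hint1 j hj).aestronglyMeasurable (hint2 k hk).aestronglyMeasurable
    have e1 : ∫ ω, (X₁ ω - μX) ^ j ∂μ = mom j := by
      rw [(hidp1 j).integral_eq, hmom j]
    have e2 : ∫ ω, (X₂ ω - μX) ^ k ∂μ = mom k := by
      rw [(hidp2 k).integral_eq, hmom k]
    calc ∫ ω, (X₁ ω - μX) ^ j * (X₂ ω - μX) ^ k ∂μ
        = integral μ ((fun ω => (X₁ ω - μX) ^ j) * fun ω => (X₂ ω - μX) ^ k) := rfl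
      _ = (∫ ω, (X₁ ω - μX) ^ j ∂μ) * ∫ ω, (X₂ ω - μX) ^ k ∂μ := h
      _ = mom j * mom k := by rw [e1, e2]
  -- mom 0 and mom 1
  have hm0 : mom 0 = 1 := by rw [hmom 0]; simp
  have hm1 : mom 1 = 0 := by
    have hXint : Integrable X μ := hX.integrable (by exact_mod_cast Nat.one_le_iff_ne_zero.2 (by omega))
    rw [hmom 1]
    simp only [pow_one]
    rw [integral_sub hXint (integrable_const μX), integral_const]
    simp [hμX]
  -- binomial expansion of the integral
  set f : ℕ → ℝ := fun m => (-1 : ℝ) ^ m * ((n + 1).choose m : ℝ) * (mom m * mom (n + 1 - m))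
    with hf
  have hexp : ∫ ω, (X₁ ω - X₂ ω) ^ (n + 1) ∂μ = ∑ m ∈ range (n + 2), f m := by
    have hω : ∀ ω, (X₁ ω - X₂ ω) ^ (n + 1)
        = ∑ m ∈ range (n + 2), (-1 : ℝ) ^ m * ((n + 1).choose m : ℝ)
            * ((X₁ ω - μX) ^ m * (X₂ ω - μX) ^ (n + 1 - m)) := by
      intro ω
      have h := sub_pow (X₁ ω - μX) (X₂ ω - μX) (n + 1)
      rw [show X₁ ω - X₂ ω = (X₁ ω - μX) - (X₂ ω - μX) by ring, h]
      refine Finset.sum_congr rfl fun m _ => ?_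
      have hsg : (-1 : ℝ) ^ (m + (n + 1)) = (-1 : ℝ) ^ m := by
        rw [pow_add, heven.neg_one_pow, mul_one]
      rw [hsg]; ring
    simp_rw [hω]
    rw [integral_finset_sum]
    · refine Finset.sum_congr rfl fun m hm => ?_
      rw [mem_range] at hm
      rw [integral_const_mul, hprod m (n + 1 - m) (by omega) (by omega)]
    · intro m hm
      rw [mem_range] at hm
      exact (hprodint m (n + 1 - m) (by omega) (by omega)).const_mul _
  -- split the sum
  have hf1 : f 1 = 0 := by simp [hf, hm1]
  have hfn : f n = 0 := by
    have : n + 1 - n = 1 := by omega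
    simp [hf, this, hm1]
  have hsub : ∑ m ∈ range (n + 2), f m = ∑ m ∈ range (n + 2) \ {1, n}, f m := by
    refine (Finset.sum_subset (Finset.sdiff_subset) fun x hx hx' => ?_).symm
    have : x = 1 ∨ x = n := by
      by_contra hcon
      push_neg at hcon
      exact hx' (Finset.mem_sdiff.2 ⟨hx, by simp [hcon.1, hcon.2]⟩)
    rcases this with rfl | rfl
    · exact hf1
    · exact hfn
  have hset : range (n + 2) \ {1, n} = insert 0 (insert (n + 1) (Icc 2 (n - 1))) := by
    ext x
    simp only [Finset.mem_sdiff, Finset.mem_range, Finset.mem_insert, Finset.mem_Icc,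
      Finset.mem_singleton]
    omega
  have h0notin : (0 : ℕ) ∉ insert (n + 1) (Icc 2 (n - 1)) := by
    simp only [Finset.mem_insert, Finset.mem_Icc]
    omega
  have hn1notin : n + 1 ∉ Icc 2 (n - 1) := by
    simp only [Finset.mem_Icc]
    omega
  have hf0 : f 0 = mom (n + 1) := by simp [hf, hm0]
  have hfn1 : f (n + 1) = mom (n + 1) := by
    simp [hf, hm0, heven.neg_one_pow]
  have hsum : ∑ m ∈ range (n + 2), f m
      = 2 * mom (n + 1) + ∑ j ∈ Icc 2 (n - 1), f j := by
    rw [hsub, hset, Finset.sum_insert h0notin, Finset.sum_insert hn1notin, hf0, hfn1]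
    ring
  have hS : ∑ j ∈ Finset.Icc 2 (n - 1),
      (-1 : ℝ) ^ j * ((n + 1).choose j : ℝ) * mom j * mom (n + 1 - j)
      = ∑ j ∈ Icc 2 (n - 1), f j := by
    refine Finset.sum_congr rfl fun j _ => ?_
    simp [hf]; ring
  rw [hexp, hsum, hS]
  ring
end
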